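/- Let 3 ≤ q ≤ k. Then u(k,q) ≥ 2^{q−2} · g(k−q+2, 2). -/

import Mathlib

/-- Number of coordinates of `x ∈ {−1,+1}^k` (encoded as `Fin k → Bool`, `true ↔ +1`)
equal to `+1`. -/
def PosCount {k : ℕ} (x : Fin k → Bool) : ℕ :=
  (Finset.univ.filter fun i => x i = true).card

/-- Walsh function `w_L(x) = ∏_{j ∈ L} x_j` on `{−1,+1}^k`, `true ↔ +1`. -/
noncomputable def Walsh {k : ℕ} (L : Finset (Fin k)) : (Fin k → Bool) → ℝ :=
  fun x => ∏ j ∈ L, (if x j then (1 : ℝ) else -1)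

/-- `B^k_q`: the linear span of the Walsh functions `w_L` with `|L| ≤ q`. -/
noncomputable def BSpace (k q : ℕ) : Submodule ℝ ((Fin k → Bool) → ℝ) :=
  Submodule.span ℝ { f | ∃ L : Finset (Fin k), L.card ≤ q ∧ f = Walsh L }

/-- `(B^k_q)_+`: the nonnegative cone of `B^k_q`. -/
noncomputable def BPlus (k q : ℕ) : Set ((Fin k → Bool) → ℝ) :=
  { φ | φ ∈ BSpace k q ∧ ∀ x, 0 ≤ φ x }

/-- `U` is a set of uniqueness for the class `C`. -/
def IsUniqSet {k : ℕ} (C : Set ((Fin k → Bool) → ℝ)) (U : Set (Fin k → Bool)) : Prop :=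
  ∀ φ ∈ C, (∀ x ∈ U, φ x = 0) → φ = 0

/-- `u(k,q)`: minimal cardinality of a set of uniqueness for `(B^k_q)_+`. -/
noncomputable def uMin (k q : ℕ) : ℕ :=
  sInf { n | ∃ U : Set (Fin k → Bool), U.ncard = n ∧ IsUniqSet (BPlus k q) U }

/-- Level set `W_D`. -/
def LevelSet (k : ℕ) (D : Set ℕ) : Set (Fin k → Bool) :=
  { x | PosCount x ∈ D }

/-- Subcube of `{−1,+1}^k` obtained by fixing the coordinates in `F` to the signs `ε`. -/
def Subcube {k : ℕ} (F : Finset (Fin k)) (ε : Fin k → Bool) : Set (Fin k → Bool) :=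
  { x | ∀ i ∈ F, x i = ε i }

/-- `g(k,q)`: minimal cardinality of a subset of `{−1,+1}^k` meeting every `(k−q)`-subcube. -/
noncomputable def gMin (k q : ℕ) : ℕ :=
  sInf { n | ∃ A : Set (Fin k → Bool), A.ncard = n ∧
    ∀ (F : Finset (Fin k)) (ε : Fin k → Bool), F.card = q → (A ∩ Subcube F ε).Nonempty }

/-- Binomial coefficient `C(n,r)` for integer `r`, with `C(n,r) = 0` for `r < 0` or `r > n`. -/
def Cb (n : ℕ) (r : ℤ) : ℕ := if r < 0 then 0 else n.choose r.toNat
lemma prodIndicator_mem (k q : ℕ) (S : Finset (Fin k)) (hS : S.card ≤ q) (σ : Fin k → Bool) :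
    (fun x => ∏ i ∈ S, (if x i = σ i then (2:ℝ) else 0)) ∈ BSpace k q := by
  have hfun : (fun x : Fin k → Bool => ∏ i ∈ S, (if x i = σ i then (2:ℝ) else 0))
      = ∑ L ∈ S.powerset, (∏ i ∈ L, (if σ i then (1:ℝ) else -1)) • Walsh L := by
    funext x
    have h1 : ∀ i ∈ S, (if x i = σ i then (2:ℝ) else 0)
        = ((if σ i then (1:ℝ) else -1) * (if x i then (1:ℝ) else -1)) + 1 := by
      intro i _
      cases hx : x i <;> cases hs : σ i <;> simp <;> norm_num
    rw [Finset.prod_congr rfl h1, Finset.prod_add]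
    simp only [Finset.sum_apply, Pi.smul_apply, smul_eq_mul, Walsh, Finset.prod_const_one,
      mul_one]
    exact Finset.sum_congr rfl fun L _ => Finset.prod_mul_distrib
  rw [hfun]
  apply Submodule.sum_mem
  intro L hL
  exact Submodule.smul_mem _ _ (Submodule.subset_span
    ⟨L, le_trans (Finset.card_le_card (Finset.mem_powerset.mp hL)) hS, rfl⟩)

/-- A uniqueness set for `(B^k_q)_+` meets every subcube given by fixing at most `q` coords. -/
lemma uniq_hits (k q : ℕ) (U : Set (Fin k → Bool)) (hU : IsUniqSet (BPlus k q) U)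
    (S : Finset (Fin k)) (hS : S.card ≤ q) (σ : Fin k → Bool) :
    ∃ x ∈ U, ∀ i ∈ S, x i = σ i := by
  by_contra hc
  push_neg at hc
  set φ : (Fin k → Bool) → ℝ := fun x => ∏ i ∈ S, (if x i = σ i then (2:ℝ) else 0) with hφ
  have hmem : φ ∈ BPlus k q := by
    refine ⟨prodIndicator_mem k q S hS σ, fun x => Finset.prod_nonneg fun i _ => ?_⟩
    split <;> norm_num
  have hz : ∀ x ∈ U, φ x = 0 := by
    intro x hx
    obtain ⟨i, hiS, hne⟩ := hc x hx
    exact Finset.prod_eq_zero hiS (if_neg hne)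
  have h0 := hU φ hmem hz
  have hσ : φ σ = 2 ^ S.card := by simp [hφ]
  rw [h0] at hσ
  simp at hσ
  exact pow_ne_zero S.card (two_ne_zero) hσ.symm

/-- gluing map -/
def glue (t k : ℕ) (ε : Fin t → Bool) (y : Fin (k - t) → Bool) : Fin k → Bool :=
  fun i => if h : (i : ℕ) < t then ε ⟨i, h⟩ else y ⟨(i : ℕ) - t, by have := i.isLt; omega⟩

lemma glue_lt (t k : ℕ) (ε : Fin t → Bool) (y : Fin (k - t) → Bool) (i : Fin k)
    (h : (i : ℕ) < t) : glue t k ε y i = ε ⟨i, h⟩ := dif_pos h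

lemma glue_ge (t k : ℕ) (ε : Fin t → Bool) (y : Fin (k - t) → Bool) (i : Fin k)
    (h : ¬ (i : ℕ) < t) :
    glue t k ε y i = y ⟨(i : ℕ) - t, by have := i.isLt; omega⟩ := dif_neg h

/-- For `3 ≤ q ≤ k`, `u(k,q) ≥ 2^{q−2} · g(k−q+2, 2)`. -/
theorem stmt_19 (k q : ℕ) (hq : 3 ≤ q) (hqk : q ≤ k) :
    2 ^ (q - 2) * gMin (k - q + 2) 2 ≤ uMin k q := by
  classical
  set t := q - 2 with ht
  set m := k - t with hm
  have hmkq : k - q + 2 = m := by omega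
  rw [hmkq]
  -- reduce to: every uniqueness set has ≥ 2^t * gMin m 2 elements
  have hne : { n | ∃ U : Set (Fin k → Bool), U.ncard = n ∧ IsUniqSet (BPlus k q) U }.Nonempty := by
    refine ⟨(Set.univ : Set (Fin k → Bool)).ncard, Set.univ, rfl, ?_⟩
    intro φ _ h
    funext x
    exact h x (Set.mem_univ x)
  apply le_csInf hne
  rintro n ⟨U, rfl, hU⟩
  -- embeddings
  have htk : t ≤ k := by omega
  set embT : Fin t → Fin k := fun i => ⟨i, by omega⟩ with hembT
  set embM : Fin m → Fin k := fun j => ⟨t + (j : ℕ), by have := j.isLt; omega⟩ with hembM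
  -- slices
  set A : (Fin t → Bool) → Set (Fin m → Bool) := fun ε => {y | glue t k ε y ∈ U} with hA
  -- each slice hits every 2-subcube
  have hhit : ∀ ε : Fin t → Bool, ∀ (F : Finset (Fin m)) (εs : Fin m → Bool),
      F.card = 2 → ((A ε) ∩ Subcube F εs).Nonempty := by
    intro ε F εs hF
    set S : Finset (Fin k) := Finset.univ.image embT ∪ F.image embM with hSdef
    have hinjT : Function.Injective embT := by
      intro a b hab
      simpa [hembT, Fin.ext_iff] using hab
    have hinjM : Function.Injective embM := by
      intro a b hab
      simp only [hembM, Fin.ext_iff] at hab ⊢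
      omega
    have hdisj : Disjoint (Finset.univ.image embT) (F.image embM) := by
      rw [Finset.disjoint_left]
      rintro a ha hb
      simp only [Finset.mem_image] at ha hb
      obtain ⟨i, _, rfl⟩ := ha
      obtain ⟨j, _, hj⟩ := hb
      have := congrArg Fin.val hj
      simp [hembT, hembM] at this
      omega
    have hScard : S.card = q := by
      rw [hSdef, Finset.card_union_of_disjoint hdisj, Finset.card_image_of_injective _ hinjT,
        Finset.card_image_of_injective _ hinjM, hF]
      simp [ht]
      omega
    obtain ⟨x, hxU, hxS⟩ := uniq_hits k q U hU S (le_of_eq hScard) (glue t k ε εs)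
    set y : Fin m → Bool := fun j => x (embM j) with hy
    have hglue : glue t k ε y = x := by
      funext i
      by_cases h : (i : ℕ) < t
      · rw [glue_lt t k ε y i h]
        have hiS : i ∈ S := by
          rw [hSdef, Finset.mem_union]
          left
          exact Finset.mem_image.mpr ⟨⟨i, h⟩, Finset.mem_univ _, by simp [hembT]⟩
        have := hxS i hiS
        rw [this, glue_lt t k ε εs i h]
      · rw [glue_ge t k ε y i h]
        show x (embM ⟨(i : ℕ) - t, by have := i.isLt; omega⟩) = x i
        congr 1
        simp only [hembM, Fin.ext_iff]
        have := i.isLt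
        omega
    refine ⟨y, ?_, ?_⟩
    · show glue t k ε y ∈ U
      rw [hglue]; exact hxU
    · intro j hjF
      have hjS : embM j ∈ S := by
        rw [hSdef, Finset.mem_union]
        right
        exact Finset.mem_image.mpr ⟨j, hjF, rfl⟩
      have hx := hxS (embM j) hjS
      have h1 : ¬ ((embM j : ℕ) < t) := by simp [hembM]
      rw [glue_ge t k ε εs _ h1] at hx
      have h2 : (⟨(embM j : ℕ) - t, by have := (embM j).isLt; omega⟩ : Fin (k - t)) = j := by
        simp only [Fin.ext_iff, hembM]
        omega
      rw [h2] at hx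
      show y j = εs j
      rw [hy]
      exact hx
  -- slice cardinality lower bound
  have hg : ∀ ε : Fin t → Bool, gMin m 2 ≤ (A ε).ncard :=
    fun ε => Nat.sInf_le ⟨A ε, rfl, hhit ε⟩
  -- counting
  have hUfin : U.Finite := Set.toFinite U
  set UF : Finset (Fin k → Bool) := hUfin.toFinset with hUF
  have hcard : U.ncard = UF.card := Set.ncard_eq_toFinset_card U hUfin
  set f : (Fin k → Bool) → (Fin t → Bool) := fun x i => x (embT i) with hf
  have hfib : UF.card = ∑ ε : Fin t → Bool, (UF.filter fun x => f x = ε).card :=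
    Finset.card_eq_sum_card_fiberwise (fun x _ => Finset.mem_univ _)
  have hAfib : ∀ ε : Fin t → Bool, (A ε).ncard ≤ (UF.filter fun x => f x = ε).card := by
    intro ε
    have hAfin : (A ε).Finite := Set.toFinite _
    rw [Set.ncard_eq_toFinset_card _ hAfin]
    apply Finset.card_le_card_of_injOn (glue t k ε)
    · intro y hy
      rw [Finset.mem_coe, Set.Finite.mem_toFinset] at hy
      rw [Finset.mem_coe, Finset.mem_filter]
      constructor
      · rw [hUF, Set.Finite.mem_toFinset]; exact hy
      · funext i
        have h : ((embT i : Fin k) : ℕ) < t := by simp [hembT]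
        show glue t k ε y (embT i) = ε i
        rw [glue_lt t k ε y _ h]
    · intro y1 _ y2 _ hgl
      funext j
      have h1 := congrFun hgl (embM j)
      have h : ¬ ((embM j : ℕ) < t) := by simp [hembM]
      rw [glue_ge t k ε y1 _ h, glue_ge t k ε y2 _ h] at h1
      have h2 : (⟨(embM j : ℕ) - t, by have := (embM j).isLt; omega⟩ : Fin (k - t)) = j := by
        simp only [Fin.ext_iff, hembM]; omega
      rwa [h2] at h1
  calc 2 ^ (q - 2) * gMin m 2 = ∑ _ε : Fin t → Bool, gMin m 2 := by
        simp [Finset.sum_const, Finset.card_univ, ht]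
    _ ≤ ∑ ε : Fin t → Bool, (UF.filter fun x => f x = ε).card :=
        Finset.sum_le_sum fun ε _ => le_trans (hg ε) (hAfib ε)
    _ = UF.card := hfib.symm
    _ = U.ncard := hcard.symm
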